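/- Equality in the data-processing inequality for Bayes error holds if and only if the kernel never mixes the two strict decision regions: ε*(Y) = ε*(X) if and only if for all x₁ with P₁·p_{X1}(x₁) > P₂·p_{X2}(x₁), all x₂ with P₁·p_{X1}(x₂) < P₂·p_{X2}(x₂), and all y, K(y|x₁)·K(y|x₂) = 0. -/

import Mathlib

lemma min_sum_eq_sum_min_iff {X : Type*} [Fintype X] (a b : X → ℝ) :
    min (∑ x, a x) (∑ x, b x) = ∑ x, min (a x) (b x) ↔
      (∀ x, a x ≤ b x) ∨ (∀ x, b x ≤ a x) := by
  constructor
  · intro h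
    rcases le_total (∑ x, a x) (∑ x, b x) with hle | hle
    · left
      rw [min_eq_left hle] at h
      intro x
      by_contra hx
      push_neg at hx
      have : ∑ x, min (a x) (b x) < ∑ x, a x :=
        Finset.sum_lt_sum (fun i _ => min_le_left _ _)
          ⟨x, Finset.mem_univ x, by simp [min_lt_iff, hx]⟩
      linarith
    · right
      rw [min_eq_right hle] at h
      intro x
      by_contra hx
      push_neg at hx
      have : ∑ x, min (a x) (b x) < ∑ x, b x :=
        Finset.sum_lt_sum (fun i _ => min_le_right _ _)
          ⟨x, Finset.mem_univ x, by simp [min_lt_iff, hx]⟩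
      linarith
  · rintro (h | h)
    · have h1 : ∀ x, min (a x) (b x) = a x := fun x => min_eq_left (h x)
      simp only [h1]
      exact min_eq_left (Finset.sum_le_sum fun i _ => h i)
    · have h1 : ∀ x, min (a x) (b x) = b x := fun x => min_eq_right (h x)
      simp only [h1]
      exact min_eq_right (Finset.sum_le_sum fun i _ => h i)

/-- Equality in the Bayes-error data-processing inequality holds iff the kernel
never mixes the two strict decision regions. -/
theorem bayes_error_dpi_equality_iff {X Y : Type*} [Fintype X] [Fintype Y]
    (P1 P2 : ℝ) (hP1 : 0 ≤ P1) (hP2 : 0 ≤ P2) (hP : P1 + P2 = 1)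
    (pX1 pX2 : X → ℝ) (h1 : ∀ x, 0 ≤ pX1 x) (h2 : ∀ x, 0 ≤ pX2 x)
    (hs1 : ∑ x, pX1 x = 1) (hs2 : ∑ x, pX2 x = 1)
    (K : Y → X → ℝ) (hK : ∀ y x, 0 ≤ K y x) (hKs : ∀ x, ∑ y, K y x = 1) :
    (∑ y, min (P1 * ∑ x, K y x * pX1 x) (P2 * ∑ x, K y x * pX2 x)
        = ∑ x, min (P1 * pX1 x) (P2 * pX2 x))
      ↔ ∀ x₁ x₂ y, P2 * pX2 x₁ < P1 * pX1 x₁ → P1 * pX1 x₂ < P2 * pX2 x₂ →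
          K y x₁ * K y x₂ = 0 := by
  -- rewrite LHS summands
  have hL : ∀ y, min (P1 * ∑ x, K y x * pX1 x) (P2 * ∑ x, K y x * pX2 x)
      = min (∑ x, K y x * (P1 * pX1 x)) (∑ x, K y x * (P2 * pX2 x)) := by
    intro y
    rw [Finset.mul_sum, Finset.mul_sum]
    congr 1 <;> exact Finset.sum_congr rfl fun x _ => by ring
  -- rewrite RHS as double sum
  have hR : ∑ x, min (P1 * pX1 x) (P2 * pX2 x)
      = ∑ y, ∑ x, min (K y x * (P1 * pX1 x)) (K y x * (P2 * pX2 x)) := by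
    rw [Finset.sum_comm]
    refine Finset.sum_congr rfl fun x _ => ?_
    have : ∀ y, min (K y x * (P1 * pX1 x)) (K y x * (P2 * pX2 x))
        = K y x * min (P1 * pX1 x) (P2 * pX2 x) := fun y =>
      (mul_min_of_nonneg _ _ (hK y x)).symm
    simp only [this, ← Finset.sum_mul, hKs x, one_mul]
  have key : (∑ y, min (P1 * ∑ x, K y x * pX1 x) (P2 * ∑ x, K y x * pX2 x)
        = ∑ x, min (P1 * pX1 x) (P2 * pX2 x))
      ↔ ∀ y, min (∑ x, K y x * (P1 * pX1 x)) (∑ x, K y x * (P2 * pX2 x))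
        = ∑ x, min (K y x * (P1 * pX1 x)) (K y x * (P2 * pX2 x)) := by
    simp only [hL, hR]
    rw [eq_comm]
    constructor
    · intro h y
      have := (Finset.sum_eq_sum_iff_of_le (s := Finset.univ)
        (f := fun y => ∑ x, min (K y x * (P1 * pX1 x)) (K y x * (P2 * pX2 x)))
        (g := fun y => min (∑ x, K y x * (P1 * pX1 x)) (∑ x, K y x * (P2 * pX2 x)))
        (fun y _ => le_min (Finset.sum_le_sum fun x _ => min_le_left _ _)
          (Finset.sum_le_sum fun x _ => min_le_right _ _))).1 h y (Finset.mem_univ y)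
      exact this.symm
    · intro h
      exact Finset.sum_congr rfl fun y _ => (h y).symm
  rw [key]
  constructor
  · intro h x₁ x₂ y hx1 hx2
    rcases (min_sum_eq_sum_min_iff _ _).1 (h y) with hc | hc
    · have := hc x₁
      have hK1 : K y x₁ = 0 := by
        by_contra hk
        have hk' : 0 < K y x₁ := lt_of_le_of_ne (hK y x₁) (Ne.symm hk)
        have := (mul_le_mul_iff_of_pos_left hk').1 this
        linarith
      rw [hK1, zero_mul]
    · have := hc x₂
      have hK2 : K y x₂ = 0 := by
        by_contra hk
        have hk' : 0 < K y x₂ := lt_of_le_of_ne (hK y x₂) (Ne.symm hk)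
        have := (mul_le_mul_iff_of_pos_left hk').1 this
        linarith
      rw [hK2, mul_zero]
  · intro h y
    rw [min_sum_eq_sum_min_iff]
    by_contra hc
    push_neg at hc
    obtain ⟨⟨x₁, hx1⟩, ⟨x₂, hx2⟩⟩ := hc
    have hk1 : 0 < K y x₁ := by
      rcases (hK y x₁).lt_or_eq with h' | h'
      · exact h'
      · exfalso; rw [← h'] at hx1; simp at hx1
    have hk2 : 0 < K y x₂ := by
      rcases (hK y x₂).lt_or_eq with h' | h'
      · exact h'
      · exfalso; rw [← h'] at hx2; simp at hx2
    have hp1 : P2 * pX2 x₁ < P1 * pX1 x₁ := (mul_lt_mul_iff_of_pos_left hk1).1 hx1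
    have hp2 : P1 * pX1 x₂ < P2 * pX2 x₂ := (mul_lt_mul_iff_of_pos_left hk2).1 hx2
    have := h x₁ x₂ y hp1 hp2
    nlinarith
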